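/- (Nim Stability) Let G be a game such that every subposition H of G (including G itself) satisfies o(H + *4) = o(H + *3). Then o(G + *m) = o(G + *3) for all m ≥ 3, for three-player impartial games under normal play. -/

import Mathlib

inductive IGame : Type where
  | mk : List IGame → IGame

namespace IGame

def opts : IGame → List IGame
  | mk l => l

theorem sizeOf_lt_of_mem {g G : IGame} (h : g ∈ G.opts) : sizeOf g < sizeOf G := by
  cases G with
  | mk l =>
    have h2 : g ∈ l := h
    have := List.sizeOf_lt_of_mem h2
    simp only [mk.sizeOf_spec]
    omega

def add : IGame → IGame → IGame
  | G, H =>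
    mk ((G.opts.attach.map fun g => add g.1 H) ++ (H.opts.attach.map fun h => add G h.1))
termination_by G H => sizeOf G + sizeOf H
decreasing_by
  · have := sizeOf_lt_of_mem g.2; omega
  · have := sizeOf_lt_of_mem h.2; omega

inductive Player : Type where
  | N | O | P
  deriving DecidableEq

def out : IGame → Player → Prop
  | G, .N => ∃ g : {x // x ∈ G.opts}, out g.1 .P
  | G, .O => ∀ g : {x // x ∈ G.opts}, out g.1 .N
  | G, .P => ∀ g : {x // x ∈ G.opts}, out g.1 .O
termination_by G _ => sizeOf G
decreasing_by
  all_goals exact sizeOf_lt_of_mem g.2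

theorem out_N {G : IGame} : out G .N ↔ ∃ g ∈ G.opts, out g .P := by
  rw [out]
  exact ⟨fun ⟨g, h⟩ => ⟨g.1, g.2, h⟩, fun ⟨g, hm, h⟩ => ⟨⟨g, hm⟩, h⟩⟩

theorem out_O {G : IGame} : out G .O ↔ ∀ g ∈ G.opts, out g .N := by
  rw [out]
  exact ⟨fun h g hm => h ⟨g, hm⟩, fun h g => h g.1 g.2⟩

theorem out_P {G : IGame} : out G .P ↔ ∀ g ∈ G.opts, out g .O := by
  rw [out]
  exact ⟨fun h g hm => h ⟨g, hm⟩, fun h g => h g.1 g.2⟩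

def outcome (G : IGame) : Set Player := {p | out G p}

def nim : Nat → IGame
  | 0 => mk []
  | n+1 => mk ((nim n).opts ++ [nim n])

end IGame

namespace IGame

/-- `H` is a subposition of `G`: reachable from `G` by a (possibly empty)
sequence of moves. -/
def Subpos (H G : IGame) : Prop :=
  Relation.ReflTransGen (fun a b => a ∈ b.opts) H G

/-- (Nim Stability) If every subposition `H` of `G` satisfies
`o(H + *4) = o(H + *3)`, then `o(G + *m) = o(G + *3)` for all `m ≥ 3`. -/
theorem opts_add (G H : IGame) :
    (add G H).opts = G.opts.map (fun g => add g H) ++ H.opts.map (fun h => add G h) := by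
  rw [add]
  simp [opts, List.attach_map_val]

theorem nim_opts (m : ℕ) : (nim m).opts = (List.range m).map nim := by
  induction m with
  | zero => simp [nim, opts]
  | succ n ih =>
    show ((nim n).opts ++ [nim n]) = _
    rw [ih, List.range_succ]
    simp

theorem mem_opts_add_nim {g H : IGame} {m : ℕ} :
    g ∈ (add H (nim m)).opts ↔
      (∃ a ∈ H.opts, g = add a (nim m)) ∨ (∃ k < m, g = add H (nim k)) := by
  simp [opts_add, nim_opts, eq_comm]

theorem out_add_nim (H : IGame) (m : ℕ) :
    (out (add H (nim m)) .N ↔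
      (∃ a ∈ H.opts, out (add a (nim m)) .P) ∨ (∃ k < m, out (add H (nim k)) .P)) ∧
    (out (add H (nim m)) .O ↔
      (∀ a ∈ H.opts, out (add a (nim m)) .N) ∧ (∀ k < m, out (add H (nim k)) .N)) ∧
    (out (add H (nim m)) .P ↔
      (∀ a ∈ H.opts, out (add a (nim m)) .O) ∧ (∀ k < m, out (add H (nim k)) .O)) := by
  refine ⟨?_, ?_, ?_⟩
  · rw [out_N]
    constructor
    · rintro ⟨g, hg, hP⟩
      rcases mem_opts_add_nim.mp hg with ⟨a, ha, rfl⟩ | ⟨k, hk, rfl⟩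
      · exact Or.inl ⟨a, ha, hP⟩
      · exact Or.inr ⟨k, hk, hP⟩
    · rintro (⟨a, ha, hP⟩ | ⟨k, hk, hP⟩)
      · exact ⟨_, mem_opts_add_nim.mpr (Or.inl ⟨a, ha, rfl⟩), hP⟩
      · exact ⟨_, mem_opts_add_nim.mpr (Or.inr ⟨k, hk, rfl⟩), hP⟩
  · rw [out_O]
    constructor
    · intro h
      exact ⟨fun a ha => h _ (mem_opts_add_nim.mpr (Or.inl ⟨a, ha, rfl⟩)),
             fun k hk => h _ (mem_opts_add_nim.mpr (Or.inr ⟨k, hk, rfl⟩))⟩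
    · rintro ⟨h1, h2⟩ g hg
      rcases mem_opts_add_nim.mp hg with ⟨a, ha, rfl⟩ | ⟨k, hk, rfl⟩
      · exact h1 a ha
      · exact h2 k hk
  · rw [out_P]
    constructor
    · intro h
      exact ⟨fun a ha => h _ (mem_opts_add_nim.mpr (Or.inl ⟨a, ha, rfl⟩)),
             fun k hk => h _ (mem_opts_add_nim.mpr (Or.inr ⟨k, hk, rfl⟩))⟩
    · rintro ⟨h1, h2⟩ g hg
      rcases mem_opts_add_nim.mp hg with ⟨a, ha, rfl⟩ | ⟨k, hk, rfl⟩
      · exact h1 a ha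
      · exact h2 k hk

/-- The step lemma: comparing `H + *m` with `H + *4` for `m ≥ 5`. -/
theorem step (H : IGame) (m : ℕ) (hm : 5 ≤ m)
    (hopt : ∀ a ∈ H.opts, ∀ p, out (add a (nim m)) p ↔ out (add a (nim 4)) p)
    (hk : ∀ k, 3 ≤ k → k < m → ∀ p, out (add H (nim k)) p ↔ out (add H (nim 3)) p) :
    ∀ p, out (add H (nim m)) p ↔ out (add H (nim 4)) p := by
  have h3 : ∀ p, out (add H (nim 3)) p ↔ out (add H (nim 3)) p := fun _ => Iff.rfl
  intro p
  obtain ⟨Nm, Om, Pm⟩ := out_add_nim H m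
  obtain ⟨N4, O4, P4⟩ := out_add_nim H 4
  cases p with
  | N =>
    rw [Nm, N4]
    constructor
    · rintro (⟨a, ha, hP⟩ | ⟨k, hkm, hP⟩)
      · exact Or.inl ⟨a, ha, (hopt a ha .P).mp hP⟩
      · by_cases h3k : 3 ≤ k
        · exact Or.inr ⟨3, by omega, (hk k h3k hkm .P).mp hP⟩
        · exact Or.inr ⟨k, by omega, hP⟩
    · rintro (⟨a, ha, hP⟩ | ⟨k, hk4, hP⟩)
      · exact Or.inl ⟨a, ha, (hopt a ha .P).mpr hP⟩
      · by_cases h3k : 3 ≤ k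
        · have : k = 3 := by omega
          subst this
          exact Or.inr ⟨3, by omega, hP⟩
        · exact Or.inr ⟨k, by omega, hP⟩
  | O =>
    rw [Om, O4]
    constructor
    · rintro ⟨h1, h2⟩
      refine ⟨fun a ha => (hopt a ha .N).mp (h1 a ha), fun k hk4 => h2 k (by omega)⟩
    · rintro ⟨h1, h2⟩
      refine ⟨fun a ha => (hopt a ha .N).mpr (h1 a ha), fun k hkm => ?_⟩
      by_cases h3k : 3 ≤ k
      · exact (hk k h3k hkm .N).mpr (h2 3 (by omega))
      · exact h2 k (by omega)
  | P =>
    rw [Pm, P4]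
    constructor
    · rintro ⟨h1, h2⟩
      refine ⟨fun a ha => (hopt a ha .O).mp (h1 a ha), fun k hk4 => h2 k (by omega)⟩
    · rintro ⟨h1, h2⟩
      refine ⟨fun a ha => (hopt a ha .O).mpr (h1 a ha), fun k hkm => ?_⟩
      by_cases h3k : 3 ≤ k
      · exact (hk k h3k hkm .O).mpr (h2 3 (by omega))
      · exact h2 k (by omega)

theorem stab (G : IGame)
    (hG : ∀ H : IGame, Subpos H G → outcome (add H (nim 4)) = outcome (add H (nim 3)))
    (m : ℕ) (H : IGame) (hm : 3 ≤ m) (hH : Subpos H G) (p : Player) :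
    out (add H (nim m)) p ↔ out (add H (nim 3)) p := by
  have hG' : ∀ H', Subpos H' G → ∀ q, out (add H' (nim 4)) q ↔ out (add H' (nim 3)) q := by
    intro H' hH' q
    exact Set.ext_iff.mp (hG H' hH') q
  rcases Nat.lt_or_ge m 5 with h5 | h5
  · interval_cases m
    · rfl
    · exact hG' H hH p
  · have hopt : ∀ a ∈ H.opts, ∀ q, out (add a (nim m)) q ↔ out (add a (nim 4)) q := by
      intro a ha q
      have hsub : Subpos a G := Relation.ReflTransGen.head ha hH
      exact (stab G hG m a (by omega) hsub q).trans (hG' a hsub q).symm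
    have hk : ∀ k, 3 ≤ k → k < m → ∀ q, out (add H (nim k)) q ↔ out (add H (nim 3)) q :=
      fun k h3k hkm q => stab G hG k H h3k hH q
    exact (step H m h5 hopt hk p).trans (hG' H hH p)
termination_by (m, sizeOf H)
decreasing_by
  · exact Prod.Lex.right m (sizeOf_lt_of_mem ha)
  · exact Prod.Lex.left _ _ hkm

theorem nim_stability (G : IGame)
    (h : ∀ H : IGame, Subpos H G → outcome (add H (nim 4)) = outcome (add H (nim 3))) :
    ∀ m : ℕ, 3 ≤ m → outcome (add G (nim m)) = outcome (add G (nim 3)) := by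
  intro m hm
  ext p
  exact stab G h m G hm Relation.ReflTransGen.refl p

end IGame
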